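/- arXiv:1602.08801 — 7 statements merged into one kernel-verified Lean document; each statement's English description precedes it below -/
import Mathlib

section
/- For all real numbers x and α with 0 ≤ x ≤ 1 and 0 ≤ α ≤ 1, one has (1+x)^α ≤ 1 + (2^α − 1)·x^α. -/
open Real Set

lemma key_aux (α : ℝ) (hα0 : 0 ≤ α) (hα1 : α ≤ 1) :
    AntitoneOn (fun u : ℝ => (u + 1) ^ α - u ^ α) (Set.Ici 1) := by
  have hderiv : ∀ u ∈ interior (Set.Ici (1:ℝ)),
      HasDerivAt (fun u : ℝ => (u + 1) ^ α - u ^ α)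
        (α * (u + 1) ^ (α - 1) - α * u ^ (α - 1)) u := by
    intro u hu
    rw [interior_Ici] at hu
    have hu0 : (0:ℝ) < u := lt_trans one_pos hu
    have h1 : HasDerivAt (fun u : ℝ => (u + 1) ^ α) ((α * (u + 1) ^ (α - 1)) * 1) u :=
      (Real.hasDerivAt_rpow_const (Or.inl (by linarith))).comp u
        ((hasDerivAt_id u).add_const 1)
    have h2 : HasDerivAt (fun u : ℝ => u ^ α) (α * u ^ (α - 1)) u :=
      Real.hasDerivAt_rpow_const (Or.inl hu0.ne')
    have h3 : HasDerivAt (fun u : ℝ => (u + 1) ^ α - u ^ α)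
        ((α * (u + 1) ^ (α - 1)) * 1 - α * u ^ (α - 1)) u := h1.sub h2
    simpa using h3
  apply antitoneOn_of_deriv_nonpos (convex_Ici 1)
  · apply ContinuousOn.sub
    · exact ContinuousOn.rpow_const (by fun_prop) (fun u _ => Or.inr hα0)
    · exact ContinuousOn.rpow_const (by fun_prop) (fun u _ => Or.inr hα0)
  · exact fun u hu => ((hderiv u hu).differentiableAt).differentiableWithinAt
  · intro u hu
    rw [(hderiv u hu).deriv]
    rw [interior_Ici] at hu
    have hu0 : (0:ℝ) < u := lt_trans one_pos hu
    have : (u + 1) ^ (α - 1) ≤ u ^ (α - 1) :=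
      Real.rpow_le_rpow_of_nonpos hu0 (by linarith) (by linarith)
    nlinarith

theorem stmt_0 (x α : ℝ) (hx0 : 0 ≤ x) (hx1 : x ≤ 1) (hα0 : 0 ≤ α) (hα1 : α ≤ 1) :
    (1 + x) ^ α ≤ 1 + ((2 : ℝ) ^ α - 1) * x ^ α := by
  rcases eq_or_lt_of_le hx0 with h0 | hx0'
  · simp only [← h0, add_zero, Real.one_rpow]
    have h2 : (1:ℝ) ≤ 2 ^ α := Real.one_le_rpow (by norm_num) hα0
    nlinarith [Real.rpow_nonneg (le_refl (0:ℝ)) α]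
  have hux : (1:ℝ) ≤ 1 / x := by
    rw [le_div_iff₀ hx0']; linarith
  have hkey := key_aux α hα0 hα1 (Set.mem_Ici.mpr le_rfl) (Set.mem_Ici.mpr hux) hux
  simp only [Real.one_rpow] at hkey
  -- hkey : (1/x + 1)^α - (1/x)^α ≤ (1+1)^α - 1
  have hxα : (0:ℝ) < x ^ α := Real.rpow_pos_of_pos hx0' α
  have hmul : x ^ α * ((1 / x + 1) ^ α - (1 / x) ^ α) ≤ x ^ α * ((1 + 1) ^ α - 1) :=
    mul_le_mul_of_nonneg_left hkey hxα.le
  have e1 : x ^ α * (1 / x + 1) ^ α = (1 + x) ^ α := by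
    rw [← Real.mul_rpow hx0 (by positivity)]
    congr 1
    field_simp
  have e2 : x ^ α * (1 / x) ^ α = 1 := by
    rw [← Real.mul_rpow hx0 (by positivity)]
    rw [mul_one_div, div_self hx0'.ne', Real.one_rpow]
  have e3 : ((1:ℝ) + 1) = 2 := by norm_num
  rw [mul_sub, mul_sub, e1, e2, e3] at hmul
  linarith
end

section
/- Let 1/2 < H < 1. There exist constants 0 < c ≤ C (depending only on H) such that for all 0 < r < s, with μ = (1/2)(s^{2H} + r^{2H} − (s−r)^{2H}): c·(s−r)·r·s^{2H−2} ≤ μ − r^{2H} ≤ C·(s−r)·r·s^{2H−2}. -/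
open Set intervalIntegral

lemma rpow_mvt {a b q : ℝ} (ha : 0 ≤ a) (hab : a < b) (hq : 0 < q) :
    ∃ ξ ∈ Set.Ioo a b, b ^ q - a ^ q = q * ξ ^ (q - 1) * (b - a) := by
  have hcont : ContinuousOn (fun x : ℝ => x ^ q) (Set.Icc a b) :=
    (Real.continuous_rpow_const hq.le).continuousOn
  have hderiv : ∀ x ∈ Set.Ioo a b,
      HasDerivAt (fun x : ℝ => x ^ q) (q * x ^ (q - 1)) x := by
    intro x hx
    exact Real.hasDerivAt_rpow_const (Or.inl (ne_of_gt (lt_of_le_of_lt ha hx.1)))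
  obtain ⟨ξ, hξ, h⟩ := exists_hasDerivAt_eq_slope _ _ hab hcont hderiv
  refine ⟨ξ, hξ, ?_⟩
  rw [eq_div_iff (sub_ne_zero.mpr hab.ne')] at h
  linarith [h]

lemma rpow_sub_rpow_le {a b q : ℝ} (ha : 0 ≤ a) (hab : a < b) (hq : 1 ≤ q) :
    b ^ q - a ^ q ≤ q * b ^ (q - 1) * (b - a) := by
  obtain ⟨ξ, hξ, h⟩ := rpow_mvt ha hab (lt_of_lt_of_le one_pos hq)
  rw [h]
  have hξpos : 0 < ξ := lt_of_le_of_lt ha hξ.1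
  have hle : ξ ^ (q - 1) ≤ b ^ (q - 1) :=
    Real.rpow_le_rpow hξpos.le hξ.2.le (by linarith)
  have hba : 0 < b - a := sub_pos.mpr hab
  have hq0 : (0:ℝ) < q := lt_of_lt_of_le one_pos hq
  have := mul_le_mul_of_nonneg_right (mul_le_mul_of_nonneg_left hle hq0.le) hba.le
  linarith

lemma le_rpow_sub_rpow {a b s p : ℝ} (ha : 0 ≤ a) (hab : a < b) (hbs : b ≤ s)
    (hp : 0 < p) (hp1 : p ≤ 1) :
    p * s ^ (p - 1) * (b - a) ≤ b ^ p - a ^ p := by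
  obtain ⟨ξ, hξ, h⟩ := rpow_mvt ha hab hp
  rw [h]
  have hξpos : 0 < ξ := lt_of_le_of_lt ha hξ.1
  have hle : s ^ (p - 1) ≤ ξ ^ (p - 1) :=
    Real.rpow_le_rpow_of_nonpos hξpos (le_trans hξ.2.le hbs) (by linarith)
  have hba : 0 < b - a := sub_pos.mpr hab
  have := mul_le_mul_of_nonneg_right (mul_le_mul_of_nonneg_left hle hp.le) hba.le
  linarith

lemma key_integral {r s H : ℝ} (hr : 0 < r) (hrs : r < s) (hH : 1 ≤ 2 * H) :
    ∫ t in r..s, (2 * H * t ^ (2 * H - 1) - 2 * H * (t - r) ^ (2 * H - 1))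
      = s ^ (2 * H) - (s - r) ^ (2 * H) - r ^ (2 * H) := by
  have hderiv : ∀ t ∈ Set.uIcc r s,
      HasDerivAt (fun t : ℝ => t ^ (2 * H) - (t - r) ^ (2 * H))
        (2 * H * t ^ (2 * H - 1) - 2 * H * (t - r) ^ (2 * H - 1)) t := by
    intro t _
    have h1 : HasDerivAt (fun t : ℝ => t ^ (2 * H)) (2 * H * t ^ (2 * H - 1)) t :=
      Real.hasDerivAt_rpow_const (Or.inr hH)
    have h2 : HasDerivAt (fun t : ℝ => (t - r) ^ (2 * H))
        (2 * H * (t - r) ^ (2 * H - 1) * 1) t := by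
      have := (Real.hasDerivAt_rpow_const (x := t - r) (p := 2 * H) (Or.inr hH)).comp t
        ((hasDerivAt_id t).sub_const r)
      exact this
    have h3 := h1.sub h2
    rw [mul_one] at h3
    exact h3
  have hcont : Continuous fun t : ℝ =>
      2 * H * t ^ (2 * H - 1) - 2 * H * (t - r) ^ (2 * H - 1) := by
    have h1 : Continuous fun t : ℝ => t ^ (2 * H - 1) :=
      Real.continuous_rpow_const (by linarith)
    exact (continuous_const.mul h1).sub
      (continuous_const.mul (h1.comp (continuous_id.sub continuous_const)))
  rw [intervalIntegral.integral_eq_sub_of_hasDerivAt hderiv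
    (hcont.intervalIntegrable r s)]
  have h0 : ((0:ℝ)) ^ (2 * H) = 0 := Real.zero_rpow (by linarith)
  simp only [sub_self, h0]
  ring

theorem stmt_3 (H : ℝ) (hH0 : 1 / 2 < H) (hH1 : H < 1) :
    ∃ c C : ℝ, 0 < c ∧ c ≤ C ∧ ∀ r s : ℝ, 0 < r → r < s →
      c * (s - r) * r * s ^ (2 * H - 2) ≤
        (1 / 2) * (s ^ (2 * H) + r ^ (2 * H) - (s - r) ^ (2 * H)) - r ^ (2 * H) ∧
      (1 / 2) * (s ^ (2 * H) + r ^ (2 * H) - (s - r) ^ (2 * H)) - r ^ (2 * H) ≤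
        C * (s - r) * r * s ^ (2 * H - 2) := by
  refine ⟨H * (2 * H - 1), 2 * H, by nlinarith, by nlinarith, ?_⟩
  intro r s hr hrs
  have hs : 0 < s := hr.trans hrs
  have hH : 1 ≤ 2 * H := by linarith
  have hsr : 0 < s - r := sub_pos.mpr hrs
  -- basic rpow facts
  have hs21 : s ^ (2 * H - 1) = s ^ (2 * H - 2) * s := by
    rw [← Real.rpow_add_one hs.ne' (2 * H - 2)]; ring_nf
  have hspow : 0 < s ^ (2 * H - 2) := Real.rpow_pos_of_pos hs _
  constructor
  · -- lower bound via integral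
    have hint := key_integral hr hrs hH
    have hmono : (2 * H * ((2 * H - 1) * s ^ (2 * H - 2) * r)) * (s - r) ≤
        ∫ t in r..s, (2 * H * t ^ (2 * H - 1) - 2 * H * (t - r) ^ (2 * H - 1)) := by
      have hconst : ∫ t in r..s, (2 * H * ((2 * H - 1) * s ^ (2 * H - 2) * r))
          = (2 * H * ((2 * H - 1) * s ^ (2 * H - 2) * r)) * (s - r) := by
        rw [intervalIntegral.integral_const, smul_eq_mul]; ring
      rw [← hconst]
      have h1 : Continuous fun t : ℝ => t ^ (2 * H - 1) :=
        Real.continuous_rpow_const (by linarith)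
      have hcont : Continuous fun t : ℝ =>
          2 * H * t ^ (2 * H - 1) - 2 * H * (t - r) ^ (2 * H - 1) :=
        (continuous_const.mul h1).sub
          (continuous_const.mul (h1.comp (continuous_id.sub continuous_const)))
      apply intervalIntegral.integral_mono_on hrs.le
        ((continuous_const).intervalIntegrable r s)
        (hcont.intervalIntegrable r s)
      intro t ht
      have htr : 0 ≤ t - r := sub_nonneg.mpr ht.1
      have hlt : t - r < t := by linarith
      have hkey := le_rpow_sub_rpow (p := 2 * H - 1) (s := s) htr hlt ht.2
        (by linarith) (by linarith)
      have : (2 * H - 1) * s ^ (2 * H - 1 - 1) * (t - (t - r))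
          = (2 * H - 1) * s ^ (2 * H - 2) * r := by ring_nf
      rw [this] at hkey
      nlinarith
    rw [hint] at hmono
    nlinarith
  · -- upper bound, case split on s ≤ 2 r
    have hr2H : 0 ≤ r ^ (2 * H) := Real.rpow_nonneg hr.le _
    have hsrH : 0 ≤ (s - r) ^ (2 * H) := Real.rpow_nonneg hsr.le _
    rcases le_total s (2 * r) with hc | hc
    · -- s ≤ 2r : use s^{2H} - r^{2H} ≤ 2H s^{2H-1} (s - r)
      have hB := rpow_sub_rpow_le (a := r) (b := s) hr.le hrs hH
      rw [hs21] at hB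
      have h2H0 : (0:ℝ) ≤ 2 * H := by linarith
      have hmul : s ^ (2 * H - 2) * s ≤ s ^ (2 * H - 2) * (2 * r) :=
        mul_le_mul_of_nonneg_left hc hspow.le
      have h3 : 2 * H * (s ^ (2 * H - 2) * s) * (s - r) ≤
          2 * H * (s ^ (2 * H - 2) * (2 * r)) * (s - r) :=
        mul_le_mul_of_nonneg_right (mul_le_mul_of_nonneg_left hmul h2H0) hsr.le
      nlinarith [hB, h3]
    · -- 2r ≤ s : use s^{2H} - (s-r)^{2H} ≤ 2H s^{2H-1} r
      have hB := rpow_sub_rpow_le (a := s - r) (b := s) hsr.le (by linarith) hH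
      rw [hs21] at hB
      have hsle : s ≤ 2 * (s - r) := by linarith
      have h2H0 : (0:ℝ) ≤ 2 * H := by linarith
      have hmul : s ^ (2 * H - 2) * s ≤ s ^ (2 * H - 2) * (2 * (s - r)) :=
        mul_le_mul_of_nonneg_left hsle hspow.le
      have h3 : 2 * H * (s ^ (2 * H - 2) * s) * (s - (s - r)) ≤
          2 * H * (s ^ (2 * H - 2) * (2 * (s - r))) * (s - (s - r)) :=
        mul_le_mul_of_nonneg_right (mul_le_mul_of_nonneg_left hmul h2H0) (by linarith)
      nlinarith [hB, h3]
end

section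
/- Let 1/2 < H < 1. There exists a constant C > 0 such that for all x ∈ [0,1]: (1/C)·x(1−x) ≤ 1 − x^{2H} − (1−x)^{2H} ≤ C·x(1−x). -/
open Real

lemma aux_5 {H : ℝ} (hH0 : 1 / 2 < H) (hH1 : H < 1) {t : ℝ} (ht0 : 0 ≤ t) (ht1 : t ≤ 1) :
    (2 * H - 1) * (t * (1 - t)) ≤ t - t ^ (2 * H) ∧ t - t ^ (2 * H) ≤ t * (1 - t) := by
  have hHpos : 0 < 2 * H := by linarith
  rcases eq_or_lt_of_le ht0 with rfl | htpos
  · simp [Real.zero_rpow (ne_of_gt hHpos)]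
  constructor
  · -- lower bound via Bernoulli
    have hb : t ^ (2 * H - 1) ≤ 1 + (2 * H - 1) * (t - 1) := by
      have := rpow_one_add_le_one_add_mul_self (s := t - 1) (by linarith)
        (p := 2 * H - 1) (by linarith) (by linarith)
      simpa using this
    have hsplit : t ^ (2 * H) = t * t ^ (2 * H - 1) := by
      rw [← Real.rpow_one_add' (le_of_lt htpos) (by linarith)]
      ring_nf
    have : t * t ^ (2 * H - 1) ≤ t * (1 + (2 * H - 1) * (t - 1)) :=
      mul_le_mul_of_nonneg_left hb ht0
    rw [hsplit]
    nlinarith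
  · -- upper bound via t^2 ≤ t^(2H)
    have h2 : t ^ (2 : ℝ) ≤ t ^ (2 * H) :=
      Real.rpow_le_rpow_of_exponent_ge htpos ht1 (by linarith)
    have ht2 : t ^ (2 : ℝ) = t * t := by
      rw [show (2:ℝ) = ((2:ℕ):ℝ) by norm_num, Real.rpow_natCast]; ring
    rw [ht2] at h2
    nlinarith

theorem stmt_5 (H : ℝ) (hH0 : 1 / 2 < H) (hH1 : H < 1) :
    ∃ C : ℝ, 0 < C ∧ ∀ x : ℝ, 0 ≤ x → x ≤ 1 →
      (1 / C) * (x * (1 - x)) ≤ 1 - x ^ (2 * H) - (1 - x) ^ (2 * H) ∧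
      1 - x ^ (2 * H) - (1 - x) ^ (2 * H) ≤ C * (x * (1 - x)) := by
  have ha : 0 < 2 * H - 1 := by linarith
  refine ⟨max 2 (1 / (2 * (2 * H - 1))), lt_of_lt_of_le two_pos (le_max_left _ _), ?_⟩
  intro x hx0 hx1
  obtain ⟨l1, u1⟩ := aux_5 hH0 hH1 hx0 hx1
  obtain ⟨l2, u2⟩ := aux_5 hH0 hH1 (by linarith : (0:ℝ) ≤ 1 - x) (by linarith : 1 - x ≤ 1)
  have hxx : 0 ≤ x * (1 - x) := mul_nonneg hx0 (by linarith)
  set C := max 2 (1 / (2 * (2 * H - 1))) with hC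
  have hCpos : 0 < C := lt_of_lt_of_le two_pos (le_max_left _ _)
  constructor
  · have h1 : 1 / C ≤ 2 * (2 * H - 1) := by
      rw [div_le_iff₀ hCpos]
      have : 1 / (2 * (2 * H - 1)) ≤ C := le_max_right _ _
      rw [div_le_iff₀ (by positivity)] at this
      nlinarith
    nlinarith
  · have h2 : (2:ℝ) ≤ C := le_max_left _ _
    nlinarith
end

section
/- Let φ_{s,r}(x,y) = (1/(2πρ)) exp(−(r^{2H}x² − 2μxy + s^{2H}y²)/(2ρ²)) be a bivariate Gaussian density, where μ ∈ ℝ, s,r > 0 and ρ² = (sr)^{2H} − μ² > 0. Then for every β ∈ [0,1] and all x, y, z ∈ ℝ: |φ_{s,r}(x,y) − φ_{s,r}(z,y)| ≤ (r^{βH}/ρ^{1+β})·|x−z|^β·e^{−β y²/(2 r^{2H})}. -/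
open Real


lemma aux_lip7 (u v : ℝ) : |Real.exp (-u^2) - Real.exp (-v^2)| ≤ |u - v| := by
  have hderiv : ∀ t : ℝ, HasDerivAt (fun t : ℝ => Real.exp (-t^2)) ((-(2*t)) * Real.exp (-t^2)) t := by
    intro t
    have h1 : HasDerivAt (fun t : ℝ => -t^2) (-(2*t)) t := by
      simpa [Pi.neg_def] using ((hasDerivAt_pow 2 t).neg)
    simpa [mul_comm] using h1.exp
  have hbound : ∀ t : ℝ, t ∈ (Set.univ : Set ℝ) → ‖deriv (fun t : ℝ => Real.exp (-t^2)) t‖ ≤ 1 := by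
    intro t _
    rw [(hderiv t).deriv]
    have h1 : 2 * |t| ≤ Real.exp (t^2) := by
      nlinarith [Real.add_one_le_exp (t^2), sq_nonneg (|t| - 1), sq_abs t]
    have h2 : Real.exp (-t^2) = (Real.exp (t^2))⁻¹ := by rw [← Real.exp_neg]
    rw [Real.norm_eq_abs, abs_mul, abs_neg, abs_of_pos (Real.exp_pos _), abs_mul]
    have := Real.exp_pos (t^2)
    rw [h2, mul_inv_le_iff₀ this]
    simpa [abs_two] using h1
  have := convex_univ.norm_image_sub_le_of_norm_deriv_le
    (f := fun t : ℝ => Real.exp (-t^2)) (fun t _ => (hderiv t).differentiableAt)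
    hbound (Set.mem_univ v) (Set.mem_univ u)
  simpa [Real.norm_eq_abs] using this

lemma aux_le_one7 (u v : ℝ) : |Real.exp (-u^2) - Real.exp (-v^2)| ≤ 1 := by
  have h1 : Real.exp (-u^2) ≤ 1 := Real.exp_le_one_iff.mpr (by nlinarith [sq_nonneg u])
  have h2 : Real.exp (-v^2) ≤ 1 := Real.exp_le_one_iff.mpr (by nlinarith [sq_nonneg v])
  have h3 := Real.exp_pos (-u^2)
  have h4 := Real.exp_pos (-v^2)
  rw [abs_sub_le_iff]; constructor <;> linarith

lemma aux_min7 (D t β : ℝ) (hD0 : 0 ≤ D) (hD1 : D ≤ 1) (hDt : D ≤ t)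
    (hβ0 : 0 ≤ β) (hβ1 : β ≤ 1) : D ≤ t ^ β := by
  rcases eq_or_lt_of_le hβ0 with hβ | hβ
  · simp [← hβ]; exact hD1
  have ht0 : 0 ≤ t := le_trans hD0 hDt
  rcases eq_or_lt_of_le ht0 with ht | ht
  · rw [← ht, Real.zero_rpow (ne_of_gt hβ)]; linarith
  rcases le_or_gt t 1 with h1 | h1
  · calc D ≤ t := hDt
      _ = t ^ (1:ℝ) := (Real.rpow_one t).symm
      _ ≤ t ^ β := Real.rpow_le_rpow_of_exponent_ge ht h1 hβ1
  · calc D ≤ 1 := hD1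
      _ = (1:ℝ) ^ β := (Real.one_rpow β).symm
      _ ≤ t ^ β := Real.rpow_le_rpow (by norm_num) h1.le hβ0


theorem stmt_7 (H s r μ ρ : ℝ) (hs : 0 < s) (hr : 0 < r) (hρ : 0 < ρ)
    (hρ2 : ρ ^ 2 = (s * r) ^ (2 * H) - μ ^ 2)
    (φ : ℝ → ℝ → ℝ)
    (hφ : ∀ x y : ℝ, φ x y =
      (1 / (2 * π * ρ)) *
        Real.exp (-(r ^ (2 * H) * x ^ 2 - 2 * μ * x * y + s ^ (2 * H) * y ^ 2) / (2 * ρ ^ 2)))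
    (β : ℝ) (hβ0 : 0 ≤ β) (hβ1 : β ≤ 1) (x y z : ℝ) :
    |φ x y - φ z y| ≤
      (r ^ (β * H) / ρ ^ (1 + β)) * |x - z| ^ β * Real.exp (-β * y ^ 2 / (2 * r ^ (2 * H))) := by
  set a : ℝ := r ^ H with ha_def
  have ha : (0:ℝ) < a := Real.rpow_pos_of_pos hr H
  have hc : r ^ (2*H) = a^2 := by rw [two_mul, Real.rpow_add hr, sq]
  set S : ℝ := s ^ (2*H) with hS_def
  have hμ2 : μ^2 = S * a^2 - ρ^2 := by
    have h := Real.mul_rpow hs.le hr.le (z := 2*H)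
    rw [h, hc] at hρ2
    rw [hS_def]; linarith
  have hπ : (0:ℝ) < π := Real.pi_pos
  have hsq2 : (0:ℝ) < Real.sqrt 2 := by positivity
  set u : ℝ → ℝ := fun w => (a^2 * w - μ * y) / (Real.sqrt 2 * ρ * a) with hu_def
  have hden : (Real.sqrt 2 * ρ * a)^2 = 2 * ρ^2 * a^2 := by
    rw [mul_pow, mul_pow, Real.sq_sqrt (by norm_num : (0:ℝ) ≤ 2)]
  have key : ∀ w : ℝ, φ w y =
      (1 / (2 * π * ρ)) * (Real.exp (-(y^2)/(2*a^2)) * Real.exp (-(u w)^2)) := by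
    intro w
    rw [hφ, hc, ← Real.exp_add]
    congr 2
    show -(a^2 * w ^ 2 - 2 * μ * w * y + S * y ^ 2) / (2 * ρ ^ 2)
      = -(y^2)/(2*a^2) + -((a^2 * w - μ * y) / (Real.sqrt 2 * ρ * a))^2
    rw [div_pow, hden]
    field_simp
    linear_combination y^2 * hμ2
  have hdiff : φ x y - φ z y =
      (1/(2*π*ρ)) * Real.exp (-(y^2)/(2*a^2)) * (Real.exp (-(u x)^2) - Real.exp (-(u z)^2)) := by
    rw [key x, key z]; ring
  set D := |Real.exp (-(u x)^2) - Real.exp (-(u z)^2)| with hD_def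
  have habs : |φ x y - φ z y| = (1/(2*π*ρ)) * Real.exp (-(y^2)/(2*a^2)) * D := by
    rw [hdiff, abs_mul, abs_of_pos (by positivity)]
  set t : ℝ := a * |x - z| / (Real.sqrt 2 * ρ) with ht_def
  have hux : |u x - u z| = t := by
    rw [hu_def, ht_def]
    have h1 : (a^2 * x - μ*y)/(Real.sqrt 2 * ρ * a) - (a^2 * z - μ*y)/(Real.sqrt 2 * ρ * a)
        = a*(x-z)/(Real.sqrt 2*ρ) := by
      field_simp; ring
    simp only
    rw [h1, abs_div, abs_mul, abs_of_pos ha, abs_of_pos (by positivity : (0:ℝ) < Real.sqrt 2 * ρ)]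
  have hDt : D ≤ t := by rw [← hux]; exact aux_lip7 _ _
  have hDβ : D ≤ t ^ β := aux_min7 D t β (abs_nonneg _) (aux_le_one7 _ _) hDt hβ0 hβ1
  have htβ : t ^ β = a^β * |x-z|^β / ((Real.sqrt 2)^β * ρ^β) := by
    rw [ht_def, Real.div_rpow (by positivity) (by positivity),
      Real.mul_rpow ha.le (abs_nonneg _), Real.mul_rpow hsq2.le hρ.le]
  have hra : r ^ (β*H) = a ^ β := by rw [mul_comm β H, Real.rpow_mul hr.le]
  have hρ1β : ρ ^ (1+β) = ρ * ρ^β := by rw [Real.rpow_add hρ, Real.rpow_one]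
  have hE2 : (0:ℝ) < Real.exp (-β * y^2/(2*r^(2*H))) := Real.exp_pos _
  have hexp_le : Real.exp (-(y^2)/(2*a^2)) ≤ Real.exp (-β * y^2/(2*r^(2*H))) := by
    rw [hc]
    apply Real.exp_le_exp.mpr
    rw [div_le_div_iff₀ (by positivity) (by positivity)]
    nlinarith [mul_nonneg (mul_nonneg (sub_nonneg.mpr hβ1) (sq_nonneg y)) (sq_nonneg a)]
  have hT : (1:ℝ) ≤ (Real.sqrt 2)^β := by
    have h12 : (1:ℝ) ≤ Real.sqrt 2 := by
      nlinarith [Real.sq_sqrt (show (0:ℝ) ≤ 2 by norm_num), Real.sqrt_nonneg 2]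
    calc (1:ℝ) = 1 ^ β := (Real.one_rpow β).symm
      _ ≤ (Real.sqrt 2)^β := Real.rpow_le_rpow zero_le_one h12 hβ0
  have hP : (0:ℝ) < ρ^β := Real.rpow_pos_of_pos hρ β
  have hA : (0:ℝ) < a^β := Real.rpow_pos_of_pos ha β
  have hX : (0:ℝ) ≤ |x-z|^β := Real.rpow_nonneg (abs_nonneg _) β
  rw [habs, hra, hρ1β]
  calc (1/(2*π*ρ)) * Real.exp (-(y^2)/(2*a^2)) * D
      ≤ (1/(2*π*ρ)) * Real.exp (-β*y^2/(2*r^(2*H))) * (t^β) := by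
        apply mul_le_mul ?_ hDβ (abs_nonneg _) (by positivity)
        exact mul_le_mul_of_nonneg_left hexp_le (by positivity)
    _ = (a^β * |x-z|^β * Real.exp (-β*y^2/(2*r^(2*H)))) / (2*π*ρ*((Real.sqrt 2)^β * ρ^β)) := by
        rw [htβ]; ring
    _ ≤ (a^β * |x-z|^β * Real.exp (-β*y^2/(2*r^(2*H)))) / (ρ * ρ^β) := by
        have h2πT : (1:ℝ) ≤ 2*π*(Real.sqrt 2)^β := by
          have hm := mul_le_mul_of_nonneg_left hT (by positivity : (0:ℝ) ≤ 2*π)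
          rw [mul_one] at hm
          have := Real.pi_gt_three
          linarith
        have h1 : ρ * ρ^β ≤ 2*π*ρ*((Real.sqrt 2)^β * ρ^β) := by
          calc ρ * ρ^β = 1 * (ρ * ρ^β) := (one_mul _).symm
            _ ≤ (2*π*(Real.sqrt 2)^β) * (ρ*ρ^β) :=
                mul_le_mul_of_nonneg_right h2πT (by positivity)
            _ = 2*π*ρ*((Real.sqrt 2)^β*ρ^β) := by ring
        exact div_le_div_of_nonneg_left (by positivity) (by positivity) h1
    _ = a^β/(ρ*ρ^β) * |x-z|^β * Real.exp (-β*y^2/(2*r^(2*H))) := by ring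
end

section
/- Under the assumptions of the previous Gaussian density estimate, for the density φ_{s,r} one also has the rectangle increment bound: |φ_{s,r}(x,y) − φ_{s,r}(x,b) − φ_{s,r}(a,y) + φ_{s,r}(a,b)| ≤ 2·((sr)^{βH/2}/ρ^{1+β})·|(x−a)(y−b)|^{β/2} for all a,b,x,y ∈ ℝ and β ∈ [0,1]. -/
open Real

lemma gauss_lip (p q : ℝ) : |Real.exp (-p^2/2) - Real.exp (-q^2/2)| ≤ |p - q| := by
  have hderiv : ∀ t : ℝ, HasDerivAt (fun u : ℝ => Real.exp (-u^2/2)) (Real.exp (-t^2/2) * (-t)) t := by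
    intro t
    have h1 : HasDerivAt (fun u : ℝ => -u^2/2) (-t) t := by
      have h := ((hasDerivAt_pow 2 t).neg).div_const 2
      refine h.congr_deriv ?_
      norm_num; ring
    simpa using h1.exp
  have hbound : ∀ t : ℝ, ‖Real.exp (-t^2/2) * (-t)‖ ≤ 1 := by
    intro t
    have h1 : |t| ≤ Real.exp (t^2/2) := by
      have := Real.add_one_le_exp (t^2/2)
      nlinarith [abs_nonneg t, sq_abs t, sq_nonneg (|t| - 1)]
    have h2 : Real.exp (-t^2/2) * |t| ≤ Real.exp (-t^2/2) * Real.exp (t^2/2) :=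
      mul_le_mul_of_nonneg_left h1 (Real.exp_pos _).le
    rw [← Real.exp_add] at h2
    simp only [norm_mul, Real.norm_eq_abs, abs_neg, abs_exp]
    calc Real.exp (-t^2/2) * |t| ≤ Real.exp (-t^2/2 + t^2/2) := h2
    _ = 1 := by ring_nf; exact Real.exp_zero
  have := Convex.norm_image_sub_le_of_norm_deriv_le
    (f := fun u : ℝ => Real.exp (-u^2/2)) (s := Set.univ) (C := 1)
    (fun t _ => (hderiv t).differentiableAt)
    (fun t _ => by rw [(hderiv t).deriv]; exact hbound t)
    convex_univ (Set.mem_univ q) (Set.mem_univ p)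
  simpa [Real.norm_eq_abs] using this

lemma gauss_two (p q : ℝ) : |Real.exp (-p^2/2) - Real.exp (-q^2/2)| ≤ 2 := by
  have h1 : Real.exp (-p^2/2) ≤ 1 := Real.exp_le_one_iff.mpr (by nlinarith [sq_nonneg p, sq_nonneg q])
  have h2 : Real.exp (-q^2/2) ≤ 1 := Real.exp_le_one_iff.mpr (by nlinarith [sq_nonneg p, sq_nonneg q])
  have h3 := (Real.exp_pos (-p^2/2)).le
  have h4 := (Real.exp_pos (-q^2/2)).le
  rw [abs_le]; constructor <;> nlinarith

lemma comb (D t β : ℝ) (ht : 0 ≤ t) (hβ0 : 0 ≤ β) (hβ1 : β ≤ 1)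
    (h1 : |D| ≤ t) (h2 : |D| ≤ 2) : |D| ≤ 2 * t ^ β := by
  rcases eq_or_lt_of_le ht with h0 | h0
  · have : |D| ≤ 0 := by rw [← h0] at h1; exact h1
    have : (0:ℝ) ≤ t ^ β := Real.rpow_nonneg ht β
    linarith
  rcases le_or_gt t 1 with h | h
  · have : t ^ (1:ℝ) ≤ t ^ β := Real.rpow_le_rpow_of_exponent_ge h0 h hβ1
    rw [Real.rpow_one] at this
    nlinarith [Real.rpow_nonneg ht β]
  · have : (1:ℝ) ≤ t ^ β := Real.one_le_rpow h.le hβ0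
    linarith

lemma aux8 (H s r μ ρ : ℝ) (hs : 0 < s) (hr : 0 < r) (hρ : 0 < ρ)
    (hρ2 : ρ ^ 2 = (s * r) ^ (2 * H) - μ ^ 2)
    (φ : ℝ → ℝ → ℝ)
    (hφ : ∀ x y : ℝ, φ x y =
      (1 / (2 * π * ρ)) *
        Real.exp (-(r ^ (2 * H) * x ^ 2 - 2 * μ * x * y + s ^ (2 * H) * y ^ 2) / (2 * ρ ^ 2)))
    (β : ℝ) (hβ0 : 0 ≤ β) (hβ1 : β ≤ 1) (a b x y : ℝ) :
    |φ x y - φ x b - φ a y + φ a b| ≤ (2 / (π * ρ)) * (r ^ H * |x - a| / ρ) ^ β := by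
  have hπ : (0:ℝ) < π := Real.pi_pos
  set R := r ^ H with hR
  have hRpos : 0 < R := Real.rpow_pos_of_pos hr H
  have hRne : R ≠ 0 := ne_of_gt hRpos
  have hρne : ρ ≠ 0 := ne_of_gt hρ
  have hR2 : r ^ (2*H) = R^2 := by
    rw [mul_comm, Real.rpow_mul hr.le]
    norm_num
    rw [hR]
  have hkey : s ^ (2*H) * R^2 = ρ^2 + μ^2 := by
    have hm : (s*r) ^ (2*H) = s^(2*H) * r^(2*H) := Real.mul_rpow hs.le hr.le
    rw [hm, hR2] at hρ2; linarith
  have hdec : ∀ p q : ℝ, φ p q = (1/(2*π*ρ)) *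
      (Real.exp (-q^2/(2*R^2)) * Real.exp (-(((R*p - μ*q/R)/ρ))^2/2)) := by
    intro p q
    have hs2 : s ^ (2*H) = (ρ^2 + μ^2)/R^2 := by
      field_simp at hkey ⊢; linarith
    rw [hφ, hR2, hs2, ← Real.exp_add]
    congr 1
    field_simp
    ring
  set t := R * |x - a| / ρ with htdef
  have ht : 0 ≤ t := by positivity
  have hG : ∀ q : ℝ, |Real.exp (-(((R*x - μ*q/R)/ρ))^2/2) -
      Real.exp (-(((R*a - μ*q/R)/ρ))^2/2)| ≤ 2 * t ^ β := by
    intro q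
    refine comb _ _ _ ht hβ0 hβ1 ?_ (gauss_two _ _)
    calc |Real.exp (-(((R*x - μ*q/R)/ρ))^2/2) - Real.exp (-(((R*a - μ*q/R)/ρ))^2/2)|
        ≤ |(R*x - μ*q/R)/ρ - (R*a - μ*q/R)/ρ| := gauss_lip _ _
      _ = t := by
          rw [show (R*x - μ*q/R)/ρ - (R*a - μ*q/R)/ρ = (R*(x-a))/ρ by ring,
            abs_div, abs_mul, abs_of_pos hRpos, abs_of_pos hρ]
  have hexp1 : ∀ q : ℝ, Real.exp (-q^2/(2*R^2)) ≤ 1 := by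
    intro q; rw [Real.exp_le_one_iff, neg_div]
    have : 0 ≤ q^2/(2*R^2) := by positivity
    linarith
  have hexp0 : ∀ q : ℝ, 0 ≤ Real.exp (-q^2/(2*R^2)) := fun q => (Real.exp_pos _).le
  set c : ℝ := 1/(2*π*ρ) with hc
  have hcpos : 0 < c := by positivity
  set Gxy := Real.exp (-(((R*x - μ*y/R)/ρ))^2/2)
  set Gay := Real.exp (-(((R*a - μ*y/R)/ρ))^2/2)
  set Gxb := Real.exp (-(((R*x - μ*b/R)/ρ))^2/2)
  set Gab := Real.exp (-(((R*a - μ*b/R)/ρ))^2/2)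
  set hy := Real.exp (-y^2/(2*R^2))
  set hb := Real.exp (-b^2/(2*R^2))
  have hrw : φ x y - φ x b - φ a y + φ a b
      = c * hy * (Gxy - Gay) + c * hb * (Gab - Gxb) := by
    rw [hdec x y, hdec x b, hdec a y, hdec a b]; ring
  rw [hrw]
  calc |c * hy * (Gxy - Gay) + c * hb * (Gab - Gxb)|
      ≤ |c * hy * (Gxy - Gay)| + |c * hb * (Gab - Gxb)| := abs_add_le _ _
    _ = c * hy * |Gxy - Gay| + c * hb * |Gab - Gxb| := by
        rw [abs_mul, abs_mul, abs_mul, abs_mul, abs_of_pos hcpos,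
          abs_of_nonneg (hexp0 y), abs_of_nonneg (hexp0 b)]
    _ ≤ c * 1 * (2 * t ^ β) + c * 1 * (2 * t ^ β) := by
        gcongr
        · exact hexp1 y
        · exact hG y
        · exact hexp1 b
        · rw [abs_sub_comm]; exact hG b
    _ = (2 / (π * ρ)) * t ^ β := by rw [hc]; ring

theorem stmt_8 (H s r μ ρ : ℝ) (hs : 0 < s) (hr : 0 < r) (hρ : 0 < ρ)
    (hρ2 : ρ ^ 2 = (s * r) ^ (2 * H) - μ ^ 2)
    (φ : ℝ → ℝ → ℝ)
    (hφ : ∀ x y : ℝ, φ x y =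
      (1 / (2 * π * ρ)) *
        Real.exp (-(r ^ (2 * H) * x ^ 2 - 2 * μ * x * y + s ^ (2 * H) * y ^ 2) / (2 * ρ ^ 2)))
    (β : ℝ) (hβ0 : 0 ≤ β) (hβ1 : β ≤ 1) (a b x y : ℝ) :
    |φ x y - φ x b - φ a y + φ a b| ≤
      2 * ((s * r) ^ (β * H / 2) / ρ ^ (1 + β)) * |(x - a) * (y - b)| ^ (β / 2) := by
  have hπ : (0:ℝ) < π := Real.pi_pos
  set K : ℝ := 2 / (π * ρ) with hK
  have hKpos : 0 < K := by positivity
  set t1 : ℝ := r ^ H * |x - a| / ρ with ht1def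
  set t2 : ℝ := s ^ H * |y - b| / ρ with ht2def
  have ht1 : 0 ≤ t1 := by positivity
  have ht2 : 0 ≤ t2 := by positivity
  -- first bound
  have hA : |φ x y - φ x b - φ a y + φ a b| ≤ K * t1 ^ β :=
    aux8 H s r μ ρ hs hr hρ hρ2 φ hφ β hβ0 hβ1 a b x y
  -- second bound via the swapped density
  have hρ2' : ρ ^ 2 = (r * s) ^ (2 * H) - μ ^ 2 := by rwa [mul_comm r s]
  have hψ : ∀ u v : ℝ, (fun u v => φ v u) u v =
      (1 / (2 * π * ρ)) *
        Real.exp (-(s ^ (2 * H) * u ^ 2 - 2 * μ * u * v + r ^ (2 * H) * v ^ 2) / (2 * ρ ^ 2)) := by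
    intro u v
    simp only
    rw [hφ v u]
    ring_nf
  have hB0 := aux8 H r s μ ρ hr hs hρ hρ2' (fun u v => φ v u) hψ β hβ0 hβ1 b a y x
  have hB : |φ x y - φ x b - φ a y + φ a b| ≤ K * t2 ^ β := by
    have : φ x y - φ a y - φ x b + φ a b = φ x y - φ x b - φ a y + φ a b := by ring
    rwa [this] at hB0
  -- geometric mean
  set D := |φ x y - φ x b - φ a y + φ a b| with hD
  have hDnn : 0 ≤ D := abs_nonneg _
  have hsq : D ≤ Real.sqrt ((K * t1 ^ β) * (K * t2 ^ β)) := by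
    rw [show D = Real.sqrt (D * D) by rw [Real.sqrt_mul_self hDnn]]
    exact Real.sqrt_le_sqrt (mul_le_mul hA hB hDnn (le_trans hDnn hA))
  have hsqrt : Real.sqrt ((K * t1 ^ β) * (K * t2 ^ β)) = K * (t1 * t2) ^ (β/2) := by
    rw [show (K * t1 ^ β) * (K * t2 ^ β) = K^2 * (t1 ^ β * t2 ^ β) by ring,
      Real.sqrt_mul (sq_nonneg K), Real.sqrt_sq hKpos.le,
      ← Real.mul_rpow ht1 ht2, Real.sqrt_eq_rpow,
      ← Real.rpow_mul (mul_nonneg ht1 ht2)]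
    ring_nf
  rw [hsqrt] at hsq
  refine le_trans hsq ?_
  -- now compare K * (t1*t2)^(β/2) with the target
  have ht12 : t1 * t2 = (s*r) ^ H * |(x - a) * (y - b)| / ρ^2 := by
    rw [ht1def, ht2def, Real.mul_rpow hs.le hr.le, abs_mul]; ring
  have hP : (0:ℝ) ≤ |(x - a) * (y - b)| := abs_nonneg _
  have hsrH : (0:ℝ) ≤ (s*r) ^ H := (Real.rpow_pos_of_pos (mul_pos hs hr) H).le
  have hpow : (t1 * t2) ^ (β/2)
      = (s*r) ^ (β * H / 2) * |(x - a) * (y - b)| ^ (β/2) / ρ ^ β := by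
    rw [ht12, Real.div_rpow (mul_nonneg hsrH hP) (sq_nonneg ρ),
      Real.mul_rpow hsrH hP,
      ← Real.rpow_natCast ρ 2, ← Real.rpow_mul hρ.le,
      ← Real.rpow_mul (mul_pos hs hr).le]
    norm_num
    rw [show H * (β/2) = β * H / 2 by ring, show (2:ℝ) * (β/2) = β by ring]
  rw [hpow]
  have hρ1β : ρ ^ ((1:ℝ) + β) = ρ * ρ ^ β := by
    rw [Real.rpow_add hρ, Real.rpow_one]
  rw [hρ1β]
  have h2π : K ≤ 2 / ρ := by
    rw [hK, div_le_div_iff₀ (by positivity) hρ]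
    nlinarith [Real.pi_gt_three]
  calc K * ((s*r) ^ (β * H / 2) * |(x - a) * (y - b)| ^ (β/2) / ρ ^ β)
      ≤ (2/ρ) * ((s*r) ^ (β * H / 2) * |(x - a) * (y - b)| ^ (β/2) / ρ ^ β) := by
        apply mul_le_mul_of_nonneg_right h2π
        positivity
    _ = 2 * ((s * r) ^ (β * H / 2) / (ρ * ρ ^ β)) * |(x - a) * (y - b)| ^ (β / 2) := by
        field_simp
end

section
/- Let F₊(x) = x log x − x for x > 0 and F₊(x) = 0 for x ≤ 0, and let F_ε be the C¹ approximation defined piecewise as: F_ε(x) = 0 for x ≤ 0, F_ε(x) = x²(log ε)/(2ε) for 0 < x ≤ ε, and F_ε(x) = ε − (ε log ε)/2 + x log x − x for x > ε. Then for every ε ∈ (0,1) and all x ∈ ℝ: |F₊(x) − F_ε(x)| ≤ ε − (ε log ε)/2. -/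
theorem stmt_13 (ε : ℝ) (hε0 : 0 < ε) (hε1 : ε < 1)
    (Fp Fε : ℝ → ℝ)
    (hFp : ∀ x : ℝ, Fp x = if x ≤ 0 then 0 else x * Real.log x - x)
    (hF : ∀ x : ℝ, Fε x =
      if x ≤ 0 then 0
      else if x ≤ ε then x ^ 2 * Real.log ε / (2 * ε)
      else ε - ε * Real.log ε / 2 + x * Real.log x - x) :
    ∀ x : ℝ, |Fp x - Fε x| ≤ ε - ε * Real.log ε / 2 := by
  intro x
  have hlε : Real.log ε < 0 := Real.log_neg hε0 hε1
  have hR : 0 ≤ ε - ε * Real.log ε / 2 := by nlinarith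
  rw [hFp x, hF x]
  rcases le_or_gt x 0 with h0 | h0
  · simp [h0, hR]
  · rw [if_neg (not_le.mpr h0), if_neg (not_le.mpr h0)]
    rcases le_or_gt x ε with hxε | hxε
    · rw [if_pos hxε]
      have hM : Real.log x ≤ Real.log ε := Real.log_le_log h0 hxε
      have h : Real.log ε - Real.log x ≤ ε / x - 1 := by
        have h := Real.log_le_sub_one_of_pos (div_pos hε0 h0)
        rwa [Real.log_div hε0.ne' h0.ne'] at h
      have h2 : x * (Real.log ε - Real.log x) ≤ ε - x := by
        calc x * (Real.log ε - Real.log x) ≤ x * (ε / x - 1) :=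
              mul_le_mul_of_nonneg_left h h0.le
          _ = ε - x := by field_simp
      have e1 : x * Real.log x - x - x ^ 2 * Real.log ε / (2 * ε) =
          (2 * ε * (x * Real.log x - x) - x ^ 2 * Real.log ε) / (2 * ε) := by
        field_simp
      rw [abs_le, e1]
      have h2ε : (0:ℝ) < 2 * ε := by linarith
      have hsq : Real.log ε * (x - ε) ^ 2 ≤ 0 :=
        mul_nonpos_of_nonpos_of_nonneg hlε.le (sq_nonneg _)
      constructor
      · rw [le_div_iff₀ h2ε]
        nlinarith [mul_le_mul_of_nonneg_left h2 h2ε.le]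
      · rw [div_le_iff₀ h2ε]
        have hxM : x * Real.log x ≤ 0 :=
          mul_nonpos_of_nonneg_of_nonpos h0.le (by linarith)
        nlinarith [sq_nonneg x, mul_le_mul_of_nonneg_left hsq h0.le]
    · rw [if_neg (not_le.mpr hxε)]
      have e : x * Real.log x - x - (ε - ε * Real.log ε / 2 + x * Real.log x - x) =
          -(ε - ε * Real.log ε / 2) := by ring
      rw [e, abs_neg, abs_of_nonneg hR]
end

section
/- With ζ_n and G_n as in the previous statement, the derivatives satisfy: G_n'(x) = 0 for x ≤ 0, and there is a constant C > 0 (independent of n) such that |G_n'(x)| ≤ C·x^{−1}(1 + |log x|) for all x > 0 and n ≥ 2; moreover G_n'(x) → 1/x for every x > 0 as n → ∞. -/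
open Filter MeasureTheory Set Real
open scoped Convolution

noncomputable def myBump (x : ℝ) : ℝ := expNegInvGlue (x * (2 - x))

lemma myBump_eq (x : ℝ) :
    (if 0 < x ∧ x < 2 then Real.exp (1 / ((x - 1) ^ 2 - 1)) else 0) = myBump x := by
  unfold myBump
  by_cases h : 0 < x ∧ x < 2
  · rw [if_pos h]
    have hpos : 0 < x * (2 - x) := mul_pos h.1 (by linarith [h.2])
    rw [expNegInvGlue, if_neg (not_le.2 hpos)]
    congr 1
    rw [neg_inv] at *
    field_simp
    rw [show (x - 1) ^ 2 - 1 = -(x * (2 - x)) by ring, div_neg]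
  · rw [if_neg h]
    have h0 : x * (2 - x) ≤ 0 := by
      rcases not_and_or.1 h with h1 | h2
      · push_neg at h1
        nlinarith
      · push_neg at h2
        nlinarith
    rw [expNegInvGlue.zero_of_nonpos h0]

lemma myBump_contDiff : ContDiff ℝ 1 myBump := by
  have : myBump = expNegInvGlue ∘ (fun x : ℝ => x * (2 - x)) := rfl
  rw [this]
  exact (expNegInvGlue.contDiff (n := 1)).comp (contDiff_id.mul (contDiff_const.sub contDiff_id))

lemma myBump_zero {x : ℝ} (h : x ∉ Set.Ioo (0:ℝ) 2) : myBump x = 0 := by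
  unfold myBump
  apply expNegInvGlue.zero_of_nonpos
  simp only [Set.mem_Ioo, not_and_or, not_lt] at h
  rcases h with h | h <;> nlinarith

lemma myBump_nonneg (x : ℝ) : 0 ≤ myBump x := expNegInvGlue.nonneg _

lemma myBump_compactSupport : HasCompactSupport myBump := by
  apply HasCompactSupport.intro (isCompact_Icc (a := (0:ℝ)) (b := 2))
  intro x hx
  exact myBump_zero (fun h => hx (Set.mem_Icc.2 ⟨le_of_lt h.1, le_of_lt h.2⟩))

lemma myBump_differentiable : Differentiable ℝ myBump :=
  myBump_contDiff.differentiable one_ne_zero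

lemma myBump_deriv_zero {r : ℝ} (h : r ∉ Set.Icc (0:ℝ) 2) : deriv myBump r = 0 := by
  have hopen : IsOpen (Set.Icc (0:ℝ) 2)ᶜ := isClosed_Icc.isOpen_compl
  have hev : myBump =ᶠ[nhds r] (fun _ => 0) := by
    filter_upwards [hopen.mem_nhds h] with y hy
    exact myBump_zero (fun hy2 => hy (Set.mem_Icc.2 ⟨le_of_lt hy2.1, le_of_lt hy2.2⟩))
  rw [hev.deriv_eq, deriv_const]

lemma myBump_deriv_bound : ∃ K : ℝ, 0 < K ∧ ∀ r : ℝ, |deriv myBump r| ≤ K := by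
  obtain ⟨K, hK⟩ := (myBump_compactSupport.deriv).exists_bound_of_continuous
    (myBump_contDiff.continuous_deriv le_rfl)
  exact ⟨max K 1, lt_of_lt_of_le one_pos (le_max_right _ _),
    fun r => le_trans (by simpa using hK r) (le_max_left _ _)⟩


lemma hasDerivAt_sub_mul_log {t : ℝ} (ht : t ≠ 0) :
    HasDerivAt (fun t : ℝ => t - t * Real.log t) (-Real.log t) t := by
  have h1 := Real.hasDerivAt_mul_log ht
  have := (hasDerivAt_id t).sub h1
  exact this.congr_deriv (by ring)

lemma intOn_neglog : IntegrableOn (fun t : ℝ => -Real.log t) (Ioc (0:ℝ) 1) := by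
  have hcont : ContinuousOn (fun t : ℝ => t - t * Real.log t) (Icc (0:ℝ) 1) :=
    (continuous_id.sub Real.continuous_mul_log).continuousOn
  exact intervalIntegral.integrableOn_deriv_of_nonneg hcont
    (fun t ht => hasDerivAt_sub_mul_log (ne_of_gt ht.1))
    (fun t ht => neg_nonneg.2 (Real.log_nonpos (le_of_lt ht.1) (le_of_lt ht.2)))

lemma intOn_log {x : ℝ} (hx : 0 < x) (hx2 : x ≤ 2) :
    IntegrableOn Real.log (Ioc (0:ℝ) x) := by
  have h1 : IntegrableOn Real.log (Ioc (0:ℝ) 1) := by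
    have h := intOn_neglog.neg
    have he : (-fun t : ℝ => -Real.log t) = Real.log := by funext t; simp
    rwa [he] at h
  rcases le_or_gt x 1 with h | h
  · exact h1.mono_set (Ioc_subset_Ioc le_rfl h)
  · have hsub : Icc (1:ℝ) x ⊆ {(0:ℝ)}ᶜ := by
      intro t ht
      simp only [mem_compl_iff, mem_singleton_iff]
      have := ht.1; intro h0; rw [h0] at this; linarith
    have h2 : IntegrableOn Real.log (Ioc (1:ℝ) x) :=
      ((Real.continuousOn_log.mono hsub).integrableOn_compact isCompact_Icc).mono_set
        Ioc_subset_Icc_self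
    have heq : Ioc (0:ℝ) x = Ioc 0 1 ∪ Ioc 1 x :=
      (Ioc_union_Ioc_eq_Ioc (le_of_lt one_pos) (le_of_lt h)).symm
    rw [heq]
    exact h1.union h2

lemma neglog_integral {x : ℝ} (hx : 0 < x) (hx2 : x ≤ 2) :
    ∫ t in Ioc (0:ℝ) x, -Real.log t = x - x * Real.log x := by
  have hint : IntegrableOn (fun t : ℝ => -Real.log t) (Ioc (0:ℝ) x) := (intOn_log hx hx2).neg
  have hcont : ContinuousOn (fun t : ℝ => t - t * Real.log t) (Icc (0:ℝ) x) :=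
    (continuous_id.sub Real.continuous_mul_log).continuousOn
  have hderiv : ∀ t ∈ Ioo (0:ℝ) x,
      HasDerivWithinAt (fun t : ℝ => t - t * Real.log t) (-Real.log t) (Ioi t) t :=
    fun t ht => (hasDerivAt_sub_mul_log (ne_of_gt ht.1)).hasDerivWithinAt
  have hii : IntervalIntegrable (fun t : ℝ => -Real.log t) volume 0 x := by
    rw [intervalIntegrable_iff_integrableOn_Ioc_of_le (le_of_lt hx)]
    exact hint
  have := intervalIntegral.integral_eq_sub_of_hasDeriv_right_of_le (le_of_lt hx) hcont hderiv hii
  rw [intervalIntegral.integral_of_le (le_of_lt hx)] at this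
  rw [this]
  simp

lemma abslog_integral_le {x : ℝ} (hx : 0 < x) (hx2 : x ≤ 2) :
    ∫ t in Ioc (0:ℝ) x, |Real.log t| ≤ 3 * x * (1 + |Real.log x|) := by
  have hint : IntegrableOn Real.log (Ioc (0:ℝ) x) := intOn_log hx hx2
  have hconst : IntegrableOn (fun _ : ℝ => (2:ℝ)) (Ioc (0:ℝ) x) :=
    integrableOn_const measure_Ioc_lt_top.ne
  have hca : IntegrableOn (fun t : ℝ => -Real.log t + 2) (Ioc (0:ℝ) x) := hint.neg.add hconst
  have h1 : ∫ t in Ioc (0:ℝ) x, |Real.log t| ≤ ∫ t in Ioc (0:ℝ) x, (-Real.log t + 2) := by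
    apply setIntegral_mono_on hint.abs hca measurableSet_Ioc
    intro t ht
    rcases le_or_gt t 1 with h | h
    · rw [abs_of_nonpos (Real.log_nonpos (le_of_lt ht.1) h)]; linarith
    · rw [abs_of_nonneg (Real.log_nonneg (le_of_lt h))]
      have hl : Real.log t ≤ Real.log 2 := Real.log_le_log (lt_trans one_pos h) (le_trans ht.2 hx2)
      have h2 : Real.log 2 < 1 := by
        rw [show (1:ℝ) = Real.log (Real.exp 1) by simp]
        exact Real.log_lt_log two_pos (by linarith [Real.exp_one_gt_d9])
      linarith
  have h2 : ∫ t in Ioc (0:ℝ) x, (-Real.log t + 2)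
      = (∫ t in Ioc (0:ℝ) x, -Real.log t) + ∫ t in Ioc (0:ℝ) x, (2:ℝ) :=
    integral_add hint.neg hconst
  have h3 : ∫ t in Ioc (0:ℝ) x, (2:ℝ) = 2 * x := by
    simp [Real.volume_Ioc]
    rw [max_eq_left hx.le]
    ring
  have h4 : x - x * Real.log x + 2 * x ≤ 3 * x * (1 + |Real.log x|) := by
    have := neg_abs_le (Real.log x)
    have := abs_nonneg (Real.log x)
    nlinarith
  rw [h2, h3, neglog_integral hx hx2] at h1
  linarith

set_option maxHeartbeats 2000000 in
theorem stmt_15 (c : ℝ)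
    (ζ : ℝ → ℝ)
    (hζ : ∀ x : ℝ, ζ x =
      if 0 < x ∧ x < 2 then c * Real.exp (1 / ((x - 1) ^ 2 - 1)) else 0)
    (hnorm : ∫ x : ℝ, ζ x = 1)
    (ζn : ℕ → ℝ → ℝ) (hζn : ∀ n : ℕ, ∀ x : ℝ, ζn n x = (n : ℝ) * ζ ((n : ℝ) * x))
    (G : ℕ → ℝ → ℝ)
    (hG : ∀ n : ℕ, ∀ x : ℝ,
      G n x = ∫ y : ℝ, (if 0 < y then Real.log y else 0) * ζn n (x - y)) :
    (∀ n : ℕ, 2 ≤ n → ∀ x : ℝ, x ≤ 0 → deriv (G n) x = 0) ∧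
    (∃ C : ℝ, 0 < C ∧ ∀ n : ℕ, 2 ≤ n → ∀ x : ℝ, 0 < x →
      |deriv (G n) x| ≤ C * x⁻¹ * (1 + |Real.log x|)) ∧
    (∀ x : ℝ, 0 < x → Tendsto (fun n : ℕ => deriv (G n) x) atTop (nhds (1 / x))) := by
  classical
  set F : ℝ → ℝ := fun y => if 0 < y then Real.log y else 0 with hF
  -- ζ in terms of myBump
  have hζb : ζ = fun x => c * myBump x := by
    funext x
    rw [hζ, ← myBump_eq x]
    split_ifs <;> ring
  -- c is positive
  have hc : 0 < c := by
    by_contra hc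
    push_neg at hc
    have : ∫ x : ℝ, ζ x ≤ 0 := by
      apply integral_nonpos
      intro x
      rw [hζb]
      exact mul_nonpos_of_nonpos_of_nonneg hc (myBump_nonneg x)
    rw [hnorm] at this; linarith
  obtain ⟨K, hKpos, hK⟩ := myBump_deriv_bound
  -- basic facts about ζn
  have hζnb : ∀ n : ℕ, ζn n = fun x => ((n : ℝ) * c) * myBump ((n : ℝ) * x) := by
    intro n; funext x; rw [hζn, hζb]; ring
  have hζn_nonneg : ∀ (n : ℕ) (x : ℝ), 0 ≤ ζn n x := by
    intro n x
    rw [hζnb]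
    exact mul_nonneg (mul_nonneg (Nat.cast_nonneg n) (le_of_lt hc)) (myBump_nonneg _)
  have hζn_zero : ∀ (n : ℕ) (x : ℝ), x ∉ Ioo (0:ℝ) (2 / n) → ζn n x = 0 := by
    intro n x hx
    rcases Nat.eq_zero_or_pos n with h0 | hn
    · rw [hζnb]; subst h0; simp
    have hn' : (0:ℝ) < n := Nat.cast_pos.2 hn
    have hmem : ((n:ℝ) * x) ∉ Ioo (0:ℝ) 2 := by
      intro h
      apply hx
      constructor
      · by_contra h0
        push_neg at h0
        nlinarith [h.1]
      · rw [lt_div_iff₀ hn']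
        linarith [h.2, mul_comm (n:ℝ) x]
    simp only [hζnb, myBump_zero hmem, mul_zero]
  have hζn_cd : ∀ n : ℕ, ContDiff ℝ 1 (ζn n) := by
    intro n
    rw [hζnb]
    have h1 : ContDiff ℝ 1 (fun x : ℝ => myBump ((n:ℝ) * x)) := by
      have : (fun x : ℝ => myBump ((n:ℝ) * x)) = myBump ∘ (fun x : ℝ => (n:ℝ) * x) := rfl
      rw [this]
      exact myBump_contDiff.comp (contDiff_const.mul contDiff_id)
    exact contDiff_const.mul h1
  have hζn_cs : ∀ n : ℕ, HasCompactSupport (ζn n) := by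
    intro n
    apply HasCompactSupport.intro (isCompact_Icc (a := (0:ℝ)) (b := 2 / n))
    intro x hx
    exact hζn_zero n x (fun h => hx ⟨le_of_lt h.1, le_of_lt h.2⟩)
  -- chain rule for ζn
  have hchain : ∀ (n : ℕ) (x : ℝ),
      HasDerivAt (ζn n) (((n : ℝ) ^ 2 * c) * deriv myBump ((n : ℝ) * x)) x := by
    intro n x
    have hb : HasDerivAt myBump (deriv myBump ((n:ℝ) * x)) ((n:ℝ) * x) :=
      (myBump_differentiable _).hasDerivAt
    have hi : HasDerivAt (fun x : ℝ => (n:ℝ) * x) (n:ℝ) x := by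
      simpa using (hasDerivAt_id x).const_mul (n:ℝ)
    have h2 := hb.comp x hi
    have h3 := h2.const_mul ((n:ℝ) * c)
    have he : (fun x : ℝ => ((n:ℝ) * c) * (myBump ∘ fun x : ℝ => (n:ℝ) * x) x) = ζn n := by
      rw [hζnb]; rfl
    rw [he] at h3
    exact h3.congr_deriv (by ring)
  have hdζ : ∀ (n : ℕ) (x : ℝ),
      deriv (ζn n) x = ((n : ℝ) ^ 2 * c) * deriv myBump ((n : ℝ) * x) :=
    fun n x => (hchain n x).deriv
  have hdζ_bound : ∀ (n : ℕ) (x : ℝ), |deriv (ζn n) x| ≤ (n : ℝ) ^ 2 * c * K := by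
    intro n x
    rw [hdζ, abs_mul]
    have h1 : |(n:ℝ)^2 * c| = (n:ℝ)^2 * c := abs_of_nonneg (by positivity)
    rw [h1]
    exact mul_le_mul_of_nonneg_left (hK _) (by positivity)
  have hdζ_zero : ∀ (n : ℕ) (x : ℝ), 0 < n → x ∉ Icc (0:ℝ) (2 / n) → deriv (ζn n) x = 0 := by
    intro n x hn hx
    have hn' : (0:ℝ) < n := Nat.cast_pos.2 hn
    rw [hdζ, myBump_deriv_zero, mul_zero]
    intro h
    apply hx
    constructor
    · by_contra h0
      push_neg at h0
      nlinarith [h.1]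
    · rw [le_div_iff₀ hn']
      linarith [h.2, mul_comm (n:ℝ) x]
  -- F is measurable and locally integrable
  have hFmeas : Measurable F := Measurable.ite measurableSet_Ioi Real.measurable_log measurable_const
  have hFint : ∀ M : ℝ, 2 ≤ M → IntegrableOn F (Icc (-M) M) := by
    intro M hM
    have hsub : Icc (-M) M ⊆ Icc (-M) (0:ℝ) ∪ (Ioc (0:ℝ) 2 ∪ Icc (2:ℝ) M) := by
      intro t ht
      rcases le_or_gt t 0 with h | h
      · exact Or.inl ⟨ht.1, h⟩
      rcases le_or_gt t 2 with h2 | h2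
      · exact Or.inr (Or.inl ⟨h, h2⟩)
      · exact Or.inr (Or.inr ⟨le_of_lt h2, ht.2⟩)
    have i1 : IntegrableOn F (Icc (-M) (0:ℝ)) := by
      apply (integrableOn_zero (s := Icc (-M) (0:ℝ))).congr_fun _ measurableSet_Icc
      intro t ht
      rw [hF]
      simp only [if_neg (not_lt.2 ht.2)]
    have i2 : IntegrableOn F (Ioc (0:ℝ) 2) := by
      apply (intOn_log two_pos le_rfl).congr_fun _ measurableSet_Ioc
      intro t ht
      rw [hF]
      simp only [if_pos ht.1]
    have i3 : IntegrableOn F (Icc (2:ℝ) M) := by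
      have hcont : ContinuousOn F (Icc (2:ℝ) M) := by
        apply ContinuousOn.congr (f := Real.log)
        · apply Real.continuousOn_log.mono
          intro t ht
          simp only [mem_compl_iff, mem_singleton_iff]
          intro h0
          rw [h0] at ht
          linarith [ht.1]
        · intro t ht
          rw [hF]
          simp only [if_pos (lt_of_lt_of_le two_pos ht.1)]
      exact hcont.integrableOn_compact isCompact_Icc
    exact ((i1.union (i2.union i3)).mono_set hsub)
  have hFli : LocallyIntegrable F := by
    rw [locallyIntegrable_iff]
    intro k hk
    obtain ⟨M0, hM0⟩ := hk.isBounded.subset_closedBall 0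
    have hsub : k ⊆ Icc (-(max M0 2)) (max M0 2) := by
      intro t ht
      have := hM0 ht
      rw [Real.closedBall_eq_Icc] at this
      constructor
      · linarith [this.1, le_max_left M0 2]
      · linarith [this.2, le_max_left M0 2]
    exact (hFint (max M0 2) (le_max_right _ _)).mono_set hsub
  -- G as a convolution
  set L : ℝ →L[ℝ] ℝ →L[ℝ] ℝ := ContinuousLinearMap.lsmul ℝ ℝ with hL
  have hGconv : ∀ n : ℕ, G n = F ⋆[L, volume] ζn n := by
    intro n
    funext x
    rw [hG]
    simp only [convolution_def, hL, ContinuousLinearMap.lsmul_apply, smul_eq_mul]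
    rfl
  have hGderiv : ∀ (n : ℕ) (x : ℝ),
      HasDerivAt (G n) (∫ t : ℝ, F t * deriv (ζn n) (x - t)) x := by
    intro n x
    have h := HasCompactSupport.hasDerivAt_convolution_right L hFli (hζn_cs n) (hζn_cd n) x
    rw [← hGconv n] at h
    have h2 : (F ⋆[L, volume] deriv (ζn n)) x = ∫ t : ℝ, F t * deriv (ζn n) (x - t) := by
      simp only [convolution_def, hL, ContinuousLinearMap.lsmul_apply, smul_eq_mul]
    rw [h2] at h
    exact h
  have hderivG : ∀ (n : ℕ) (x : ℝ),
      deriv (G n) x = ∫ t : ℝ, F t * deriv (ζn n) (x - t) :=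
    fun n x => (hGderiv n x).deriv
  -- integral of ζn is 1
  have hζn_int : ∀ n : ℕ, 2 ≤ n → ∫ t : ℝ, ζn n t = 1 := by
    intro n hn
    have hn' : (0:ℝ) < n := by exact_mod_cast Nat.lt_of_lt_of_le Nat.zero_lt_two hn
    have h1 : (fun x : ℝ => ζn n x) = fun x => (n:ℝ) * ζ ((n:ℝ) * x) := funext (hζn n)
    rw [h1, integral_const_mul, Measure.integral_comp_mul_left ζ (n:ℝ), hnorm]
    rw [abs_of_pos (inv_pos.2 hn')]
    field_simp
    rw [smul_eq_mul, mul_one, mul_one_div_cancel hn'.ne']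
  -- representation over Ioc 0 x
  have hrep1 : ∀ (n : ℕ), 2 ≤ n → ∀ (x : ℝ), 0 < x →
      deriv (G n) x = ∫ t in Ioc (0:ℝ) x, F t * deriv (ζn n) (x - t) := by
    intro n hn x hx
    rw [hderivG]
    symm
    apply setIntegral_eq_integral_of_forall_compl_eq_zero
    intro t ht
    simp only [mem_Ioc, not_and_or, not_lt, not_le] at ht
    rcases ht with h | h
    · rw [hF]; simp only [if_neg (not_lt.2 h), zero_mul]
    · rw [hdζ_zero n (x - t) (by omega), mul_zero]
      intro hmem
      linarith [hmem.1]
  -- the small-x bound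
  have hboundA : ∀ (n : ℕ), 2 ≤ n → ∀ (x : ℝ), 0 < x → x ≤ 4 / n →
      |deriv (G n) x| ≤ (48 * c * K) * x⁻¹ * (1 + |Real.log x|) := by
    intro n hn x hx hx4
    have hn' : (0:ℝ) < n := by exact_mod_cast Nat.lt_of_lt_of_le Nat.zero_lt_two hn
    have hn2 : (2:ℝ) ≤ n := by exact_mod_cast hn
    have hx2 : x ≤ 2 := le_trans hx4 (by rw [div_le_iff₀ hn']; linarith)
    rw [hrep1 n hn x hx]
    have hg_int : IntegrableOn (fun t => ((n:ℝ)^2 * c * K) * |Real.log t|) (Ioc (0:ℝ) x) :=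
      (intOn_log hx hx2).abs.const_mul _
    have h1 : |∫ t in Ioc (0:ℝ) x, F t * deriv (ζn n) (x - t)|
        ≤ ∫ t in Ioc (0:ℝ) x, ((n:ℝ)^2 * c * K) * |Real.log t| := by
      rw [← Real.norm_eq_abs]
      apply norm_integral_le_of_norm_le hg_int
      rw [ae_restrict_iff' measurableSet_Ioc]
      filter_upwards with t ht
      rw [Real.norm_eq_abs, abs_mul, hF]
      simp only [if_pos ht.1]
      calc |Real.log t| * |deriv (ζn n) (x - t)|
          ≤ |Real.log t| * ((n:ℝ)^2 * c * K) :=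
            mul_le_mul_of_nonneg_left (hdζ_bound n (x - t)) (abs_nonneg _)
        _ = ((n:ℝ)^2 * c * K) * |Real.log t| := by ring
    have h2 : ∫ t in Ioc (0:ℝ) x, ((n:ℝ)^2 * c * K) * |Real.log t|
        = ((n:ℝ)^2 * c * K) * ∫ t in Ioc (0:ℝ) x, |Real.log t| := integral_const_mul _ _
    have h3 : ((n:ℝ)^2 * c * K) * ∫ t in Ioc (0:ℝ) x, |Real.log t|
        ≤ ((n:ℝ)^2 * c * K) * (3 * x * (1 + |Real.log x|)) :=
      mul_le_mul_of_nonneg_left (abslog_integral_le hx hx2) (by positivity)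
    have hn4 : (n:ℝ) ≤ 4 / x := by
      rw [le_div_iff₀ hx]
      rw [le_div_iff₀ hn'] at hx4
      linarith [hx4]
    have h4 : ((n:ℝ)^2 * c * K) * (3 * x * (1 + |Real.log x|))
        ≤ (48 * c * K) * x⁻¹ * (1 + |Real.log x|) := by
      have hL : (0:ℝ) ≤ 1 + |Real.log x| := by positivity
      have hnx : (n:ℝ) * x ≤ 4 := by
        rw [le_div_iff₀ hx] at hn4; linarith
      have hsq : ((n:ℝ) * x)^2 ≤ 16 := by nlinarith [mul_nonneg (le_of_lt hn') (le_of_lt hx)]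
      have key : (n:ℝ)^2 * (3 * x) ≤ 48 * x⁻¹ := by
        rw [← div_eq_mul_inv, le_div_iff₀ hx]
        nlinarith [hsq]
      calc ((n:ℝ)^2 * c * K) * (3 * x * (1 + |Real.log x|))
          = ((n:ℝ)^2 * (3 * x)) * (c * K * (1 + |Real.log x|)) := by ring
        _ ≤ (48 * x⁻¹) * (c * K * (1 + |Real.log x|)) :=
            mul_le_mul_of_nonneg_right key (by positivity)
        _ = (48 * c * K) * x⁻¹ * (1 + |Real.log x|) := by ring
    linarith
  -- representation for large x via integration by parts
  have hζn_cont : ∀ n : ℕ, Continuous (ζn n) := fun n => (hζn_cd n).continuous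
  have hdζ_cont : ∀ n : ℕ, Continuous (deriv (ζn n)) := fun n =>
    (hζn_cd n).continuous_deriv le_rfl
  have hrepB : ∀ (n : ℕ), 2 ≤ n → ∀ (x : ℝ), 4 / n < x →
      deriv (G n) x = ∫ t in (x - 2 / n)..x, ζn n (x - t) / t := by
    intro n hn x hx4
    have hn' : (0:ℝ) < n := by exact_mod_cast Nat.lt_of_lt_of_le Nat.zero_lt_two hn
    set a : ℝ := x - 2 / n with ha
    have h2n : (0:ℝ) < 2 / n := by positivity
    have h24 : (2:ℝ) / n < 4 / n := by
      gcongr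
      norm_num
    have hapos : 0 < a := by rw [ha]; linarith
    have hax : a ≤ x := by rw [ha]; linarith
    -- restrict the integral to Icc a x
    have step1 : deriv (G n) x = ∫ t in Icc a x, F t * deriv (ζn n) (x - t) := by
      rw [hderivG]
      symm
      apply setIntegral_eq_integral_of_forall_compl_eq_zero
      intro t ht
      simp only [mem_Icc, not_and_or, not_le] at ht
      rcases ht with h | h
      · rw [hdζ_zero n (x - t) (by omega), mul_zero]
        intro hmem
        have := hmem.2
        rw [ha] at h
        have : 2 / (n:ℝ) < x - t := by linarith
        linarith [hmem.2]
      · rw [hdζ_zero n (x - t) (by omega), mul_zero]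
        intro hmem
        linarith [hmem.1]
    have step2 : deriv (G n) x = ∫ t in a..x, F t * deriv (ζn n) (x - t) := by
      rw [step1, integral_Icc_eq_integral_Ioc, ← intervalIntegral.integral_of_le hax]
    have step3 : deriv (G n) x = ∫ t in a..x, Real.log t * deriv (ζn n) (x - t) := by
      rw [step2]
      apply intervalIntegral.integral_congr
      intro t ht
      rw [uIcc_of_le hax] at ht
      rw [hF]
      simp only [if_pos (lt_of_lt_of_le hapos ht.1)]
    -- integration by parts
    have hvd : ∀ t : ℝ, HasDerivAt (fun t : ℝ => -ζn n (x - t)) (deriv (ζn n) (x - t)) t := by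
      intro t
      have h1 : HasDerivAt (fun t : ℝ => x - t) (-1) t := by
        simpa using (hasDerivAt_id t).const_sub x
      have h2 := (hchain n (x - t)).comp t h1
      have h3 := h2.neg
      exact h3.congr_deriv (by rw [hdζ]; ring)
    have hibp := intervalIntegral.integral_mul_deriv_eq_deriv_mul_of_hasDerivAt
      (u := Real.log) (v := fun t : ℝ => -ζn n (x - t)) (u' := fun t => t⁻¹)
      (v' := fun t => deriv (ζn n) (x - t))
      (a := a) (b := x) ?_ ?_ ?_ ?_ ?_ ?_
    · rw [step3, hibp]
      have hz1 : ζn n (x - x) = 0 := by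
        apply hζn_zero
        intro hmem
        have : x - x = (0:ℝ) := by ring
        rw [this] at hmem
        exact lt_irrefl 0 hmem.1
      have hz2 : ζn n (x - a) = 0 := by
        apply hζn_zero
        rw [ha]
        intro hmem
        have : x - (x - 2/(n:ℝ)) = 2 / n := by ring
        rw [this] at hmem
        linarith [hmem.2]
      rw [hz1, hz2]
      simp only [neg_zero, mul_zero, sub_zero, zero_sub]
      rw [← intervalIntegral.integral_neg]
      apply intervalIntegral.integral_congr
      intro t ht
      simp only [div_eq_mul_inv]
      ring
    · apply Real.continuousOn_log.mono
      intro t ht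
      rw [uIcc_of_le hax] at ht
      simp only [mem_compl_iff, mem_singleton_iff]
      intro h0
      rw [h0] at ht
      linarith [ht.1]
    · exact (((hζn_cont n).comp (continuous_const.sub continuous_id)).neg).continuousOn
    · intro t ht
      have h1 : a ⊓ x = a := inf_eq_left.2 hax
      rw [h1] at ht
      exact Real.hasDerivAt_log (ne_of_gt (lt_trans hapos ht.1))
    · intro t ht
      exact hvd t
    · apply ContinuousOn.intervalIntegrable
      apply ContinuousOn.inv₀ continuousOn_id
      intro t ht
      rw [uIcc_of_le hax] at ht
      exact ne_of_gt (lt_of_lt_of_le hapos ht.1)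
    · exact (((hdζ_cont n).comp (continuous_const.sub continuous_id))).intervalIntegrable _ _
  -- the mass identity on the interval
  have hmass : ∀ (n : ℕ), 2 ≤ n → ∀ (x : ℝ), 4 / n < x →
      ∫ t in (x - 2 / n)..x, ζn n (x - t) = 1 := by
    intro n hn x hx4
    have h1 : ∫ t in (x - 2 / n)..x, ζn n (x - t)
        = ∫ s in (x - x)..(x - (x - 2 / n)), ζn n s :=
      intervalIntegral.integral_comp_sub_left (ζn n) x
    have h2 : x - x = (0:ℝ) := by ring
    have h3 : x - (x - 2 / n) = 2 / (n:ℝ) := by ring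
    rw [h1, h2, h3]
    rw [intervalIntegral.integral_of_le (by positivity)]
    rw [setIntegral_eq_integral_of_forall_compl_eq_zero, hζn_int n hn]
    intro t ht
    apply hζn_zero
    intro hmem
    exact ht ⟨hmem.1, le_of_lt hmem.2⟩
  refine ⟨?_, ?_, ?_⟩
  · -- Part 1
    intro n hn x hx
    rw [hderivG]
    have : ∀ t : ℝ, F t * deriv (ζn n) (x - t) = 0 := by
      intro t
      rcases le_or_gt t 0 with h | h
      · rw [hF]
        simp only [if_neg (not_lt.2 h), zero_mul]
      · rw [hdζ_zero n (x - t) (by omega), mul_zero]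
        intro hmem
        have := hmem.1
        linarith
    simp only [this, integral_zero]
  · -- Part 2
    refine ⟨48 * c * K + 2, by positivity, ?_⟩
    intro n hn x hx
    have hn' : (0:ℝ) < n := by exact_mod_cast Nat.lt_of_lt_of_le Nat.zero_lt_two hn
    have hpos : (0:ℝ) ≤ x⁻¹ * (1 + |Real.log x|) := by positivity
    rcases le_or_gt x (4 / n) with h | h
    · calc |deriv (G n) x| ≤ (48 * c * K) * x⁻¹ * (1 + |Real.log x|) := hboundA n hn x hx h
        _ ≤ (48 * c * K + 2) * x⁻¹ * (1 + |Real.log x|) := by nlinarith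
    · set a : ℝ := x - 2 / n with ha
      have h2n : (0:ℝ) < 2 / n := by positivity
      have h2x : 2 / (n:ℝ) < x / 2 := by
        rw [div_lt_iff₀ hn'] at h ⊢
        linarith
      have hapos : 0 < a := by rw [ha]; linarith
      have hax : a ≤ x := by rw [ha]; linarith
      have hax2 : x / 2 < a := by rw [ha]; linarith
      rw [hrepB n hn x h]
      have hcont1 : ContinuousOn (fun t : ℝ => ζn n (x - t) / t) (uIcc a x) := by
        apply ContinuousOn.div
        · exact ((hζn_cont n).comp (continuous_const.sub continuous_id)).continuousOn
        · exact continuousOn_id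
        · intro t ht
          rw [uIcc_of_le hax] at ht
          exact ne_of_gt (lt_of_lt_of_le hapos ht.1)
      have hcont2 : ContinuousOn (fun t : ℝ => ζn n (x - t) * a⁻¹) (uIcc a x) :=
        (((hζn_cont n).comp (continuous_const.sub continuous_id)).mul continuous_const).continuousOn
      have hnonneg : 0 ≤ ∫ t in a..x, ζn n (x - t) / t := by
        apply intervalIntegral.integral_nonneg hax
        intro t ht
        exact div_nonneg (hζn_nonneg _ _) (le_trans hapos.le ht.1)
      have hup : (∫ t in a..x, ζn n (x - t) / t) ≤ ∫ t in a..x, ζn n (x - t) * a⁻¹ := by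
        apply intervalIntegral.integral_mono_on hax (hcont1.intervalIntegrable)
          (hcont2.intervalIntegrable)
        intro t ht
        rw [div_eq_mul_inv]
        apply mul_le_mul_of_nonneg_left _ (hζn_nonneg _ _)
        exact inv_anti₀ hapos ht.1
      have hval : (∫ t in a..x, ζn n (x - t) * a⁻¹) = a⁻¹ := by
        rw [intervalIntegral.integral_mul_const, hmass n hn x h, one_mul]
      rw [hval] at hup
      rw [abs_of_nonneg hnonneg]
      have hinv : a⁻¹ ≤ 2 * x⁻¹ := by
        rw [show (2:ℝ) * x⁻¹ = (x/2)⁻¹ by rw [inv_div]; ring]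
        exact inv_anti₀ (by linarith) (le_of_lt hax2)
      calc (∫ t in a..x, ζn n (x - t) / t) ≤ a⁻¹ := hup
        _ ≤ 2 * x⁻¹ := hinv
        _ ≤ (48 * c * K + 2) * x⁻¹ * (1 + |Real.log x|) := by
            have h1 : (0:ℝ) < x⁻¹ := inv_pos.2 hx
            nlinarith [abs_nonneg (Real.log x), mul_pos (mul_pos hc hKpos) h1]
  · -- Part 3
    intro x hx
    have hxne : x ≠ 0 := ne_of_gt hx
    have hev : ∀ᶠ n : ℕ in atTop, 2 ≤ n ∧ 4 / (n:ℝ) < x := by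
      filter_upwards [eventually_ge_atTop 2, eventually_gt_atTop (Nat.ceil (4 / x))]
        with n hn2 hnc
      refine ⟨hn2, ?_⟩
      have hn' : (0:ℝ) < n := by exact_mod_cast Nat.lt_of_lt_of_le Nat.zero_lt_two hn2
      have h1 : 4 / x < (n:ℝ) := lt_of_le_of_lt (Nat.le_ceil _) (by exact_mod_cast hnc)
      rw [div_lt_iff₀ hn']
      rw [div_lt_iff₀ hx] at h1
      linarith
    have htend : Tendsto (fun n : ℕ => (x - 2 / (n:ℝ))⁻¹) atTop (nhds (1 / x)) := by
      have h1 : Tendsto (fun n : ℕ => 2 / (n:ℝ)) atTop (nhds 0) :=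
        tendsto_const_div_atTop_nhds_zero_nat 2
      have h2 : Tendsto (fun n : ℕ => x - 2 / (n:ℝ)) atTop (nhds (x - 0)) :=
        tendsto_const_nhds.sub h1
      rw [sub_zero] at h2
      have h3 := h2.inv₀ hxne
      rwa [← one_div] at h3
    apply tendsto_of_tendsto_of_tendsto_of_le_of_le' (tendsto_const_nhds (x := 1/x)) htend
    · -- lower bound eventually
      filter_upwards [hev] with n hn
      obtain ⟨hn2, h⟩ := hn
      have hn' : (0:ℝ) < n := by exact_mod_cast Nat.lt_of_lt_of_le Nat.zero_lt_two hn2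
      set a : ℝ := x - 2 / n with ha
      have h2n : (0:ℝ) < 2 / n := by positivity
      have h2x : 2 / (n:ℝ) < x / 2 := by
        rw [div_lt_iff₀ hn'] at h ⊢
        linarith
      have hapos : 0 < a := by rw [ha]; linarith
      have hax : a ≤ x := by rw [ha]; linarith
      rw [hrepB n hn2 x h]
      have hcont1 : ContinuousOn (fun t : ℝ => ζn n (x - t) / t) (uIcc a x) := by
        apply ContinuousOn.div
        · exact ((hζn_cont n).comp (continuous_const.sub continuous_id)).continuousOn
        · exact continuousOn_id
        · intro t ht
          rw [uIcc_of_le hax] at ht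
          exact ne_of_gt (lt_of_lt_of_le hapos ht.1)
      have hcont2 : ContinuousOn (fun t : ℝ => ζn n (x - t) * x⁻¹) (uIcc a x) :=
        (((hζn_cont n).comp (continuous_const.sub continuous_id)).mul continuous_const).continuousOn
      have hlow : (∫ t in a..x, ζn n (x - t) * x⁻¹) ≤ ∫ t in a..x, ζn n (x - t) / t := by
        apply intervalIntegral.integral_mono_on hax (hcont2.intervalIntegrable)
          (hcont1.intervalIntegrable)
        intro t ht
        rw [div_eq_mul_inv]
        apply mul_le_mul_of_nonneg_left _ (hζn_nonneg _ _)
        exact inv_anti₀ (lt_of_lt_of_le hapos ht.1) ht.2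
      have hval : (∫ t in a..x, ζn n (x - t) * x⁻¹) = x⁻¹ := by
        rw [intervalIntegral.integral_mul_const, hmass n hn2 x h, one_mul]
      rw [hval] at hlow
      rw [one_div]
      exact hlow
    · -- upper bound eventually
      filter_upwards [hev] with n hn
      obtain ⟨hn2, h⟩ := hn
      have hn' : (0:ℝ) < n := by exact_mod_cast Nat.lt_of_lt_of_le Nat.zero_lt_two hn2
      set a : ℝ := x - 2 / n with ha
      have h2n : (0:ℝ) < 2 / n := by positivity
      have h2x : 2 / (n:ℝ) < x / 2 := by
        rw [div_lt_iff₀ hn'] at h ⊢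
        linarith
      have hapos : 0 < a := by rw [ha]; linarith
      have hax : a ≤ x := by rw [ha]; linarith
      rw [hrepB n hn2 x h]
      have hcont1 : ContinuousOn (fun t : ℝ => ζn n (x - t) / t) (uIcc a x) := by
        apply ContinuousOn.div
        · exact ((hζn_cont n).comp (continuous_const.sub continuous_id)).continuousOn
        · exact continuousOn_id
        · intro t ht
          rw [uIcc_of_le hax] at ht
          exact ne_of_gt (lt_of_lt_of_le hapos ht.1)
      have hcont2 : ContinuousOn (fun t : ℝ => ζn n (x - t) * a⁻¹) (uIcc a x) :=
        (((hζn_cont n).comp (continuous_const.sub continuous_id)).mul continuous_const).continuousOn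
      have hup : (∫ t in a..x, ζn n (x - t) / t) ≤ ∫ t in a..x, ζn n (x - t) * a⁻¹ := by
        apply intervalIntegral.integral_mono_on hax (hcont1.intervalIntegrable)
          (hcont2.intervalIntegrable)
        intro t ht
        rw [div_eq_mul_inv]
        apply mul_le_mul_of_nonneg_left _ (hζn_nonneg _ _)
        exact inv_anti₀ hapos ht.1
      have hval : (∫ t in a..x, ζn n (x - t) * a⁻¹) = a⁻¹ := by
        rw [intervalIntegral.integral_mul_const, hmass n hn2 x h, one_mul]
      rw [hval] at hup
      exact hup
end
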